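/- arXiv:2204.08281 — 5 statements merged into one kernel-verified Lean document; each statement's English description precedes it below -/
import Mathlib

section
/- Let F : ℝ^d → ℝ be twice continuously differentiable and suppose the Hessian map x ↦ ∇²F(x) is H-Lipschitz in operator norm. Then for every δ > 0 the map h(x) := ∇F^δ(x) − ∇F(x) is (δH)-Lipschitz on ℝ^d, where F^δ is the δ-ball smoothing of F. -/
open MeasureTheory Metric InnerProductSpace

noncomputable def uniformBall (d : ℕ) : Measure (EuclideanSpace ℝ (Fin d)) :=
  (volume (closedBall (0 : EuclideanSpace ℝ (Fin d)) 1))⁻¹ •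
    volume.restrict (closedBall (0 : EuclideanSpace ℝ (Fin d)) 1)

noncomputable def ballSmooth {d : ℕ} (F : EuclideanSpace ℝ (Fin d) → ℝ) (δ : ℝ)
    (x : EuclideanSpace ℝ (Fin d)) : ℝ :=
  ∫ w, F (x + δ • w) ∂(uniformBall d)

section Aux
variable {d : ℕ}

lemma vol_ne_zero : volume (closedBall (0 : EuclideanSpace ℝ (Fin d)) 1) ≠ 0 :=
  (measure_closedBall_pos volume 0 one_pos).ne'

lemma vol_ne_top : volume (closedBall (0 : EuclideanSpace ℝ (Fin d)) 1) ≠ ⊤ :=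
  measure_closedBall_lt_top.ne

instance : IsProbabilityMeasure (uniformBall d) := by
  constructor
  rw [uniformBall, Measure.smul_apply, Measure.restrict_apply_univ, smul_eq_mul]
  exact ENNReal.inv_mul_cancel vol_ne_zero vol_ne_top

lemma ae_norm_le : ∀ᵐ w ∂(uniformBall d), ‖w‖ ≤ 1 := by
  rw [uniformBall]
  refine Measure.ae_smul_measure ?_ _
  filter_upwards [ae_restrict_mem measurableSet_closedBall] with w hw
  simpa [mem_closedBall_zero_iff] using hw

lemma integrable_uniformBall {X : Type*} [NormedAddCommGroup X] {f : EuclideanSpace ℝ (Fin d) → X}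
    (hf : Continuous f) : Integrable f (uniformBall d) := by
  rw [uniformBall]
  refine Integrable.smul_measure ?_ (ENNReal.inv_ne_top.mpr vol_ne_zero)
  exact hf.continuousOn.integrableOn_compact (isCompact_closedBall _ _)

lemma hasFDerivAt_comp_add {G' : Type*} [NormedAddCommGroup G'] [NormedSpace ℝ G']
    {g : EuclideanSpace ℝ (Fin d) → G'} (c z : EuclideanSpace ℝ (Fin d))
    (hg : DifferentiableAt ℝ g (z + c)) :
    HasFDerivAt (fun z => g (z + c)) (fderiv ℝ g (z + c)) z := by
  exact hg.hasFDerivAt.comp z ((hasFDerivAt_id z).add_const c)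

variable {F : EuclideanSpace ℝ (Fin d) → ℝ}

lemma contDiff_gradient (hF : ContDiff ℝ 2 F) : ContDiff ℝ 1 (gradient F) := by
  have h1 : ContDiff ℝ 1 (fderiv ℝ F) := hF.fderiv_right (by norm_num)
  exact ((toDual ℝ (EuclideanSpace ℝ (Fin d))).symm.toContinuousLinearEquiv.toContinuousLinearMap.contDiff).comp h1

lemma toDual_gradient' (z : EuclideanSpace ℝ (Fin d)) :
    toDual ℝ (EuclideanSpace ℝ (Fin d)) (gradient F z) = fderiv ℝ F z :=
  (toDual ℝ (EuclideanSpace ℝ (Fin d))).apply_symm_apply _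

/-- The gradient of the ball smoothing is the average of the translated gradients. -/
lemma hasGradientAt_ballSmooth (hF : ContDiff ℝ 2 F) {δ : ℝ} (hδ : 0 < δ)
    (x₀ : EuclideanSpace ℝ (Fin d)) :
    HasGradientAt (ballSmooth F δ) (∫ w, gradient F (x₀ + δ • w) ∂(uniformBall d)) x₀ := by
  set μ := uniformBall d
  have hδ0 : 0 ≤ δ := hδ.le
  have hcf : Continuous (fderiv ℝ F) := hF.continuous_fderiv (by norm_num)
  obtain ⟨C, hC⟩ := (isCompact_closedBall x₀ (1 + δ)).exists_bound_of_continuousOn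
    hcf.continuousOn
  have hmove : ∀ w : EuclideanSpace ℝ (Fin d), ‖w‖ ≤ 1 →
      ∀ x ∈ ball x₀ 1, x + δ • w ∈ closedBall x₀ (1 + δ) := by
    intro w hw x hx
    rw [mem_closedBall]
    calc dist (x + δ • w) x₀ ≤ dist (x + δ • w) x + dist x x₀ := dist_triangle _ _ _
      _ ≤ δ + 1 := by
          refine add_le_add ?_ (le_of_lt (mem_ball.mp hx))
          rw [dist_eq_norm]
          simp only [add_sub_cancel_left, norm_smul, Real.norm_eq_abs, abs_of_nonneg hδ0]
          nlinarith
      _ = 1 + δ := by ring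
  have hwcont : Continuous fun w : EuclideanSpace ℝ (Fin d) => δ • w :=
    continuous_id.const_smul δ
  have hint_fderiv : ∀ x, Integrable (fun w => fderiv ℝ F (x + δ • w)) μ := fun x =>
    integrable_uniformBall (hcf.comp (continuous_const.add hwcont))
  have key : HasFDerivAt (fun x => ∫ w, F (x + δ • w) ∂μ)
      (∫ w, fderiv ℝ F (x₀ + δ • w) ∂μ) x₀ := by
    apply hasFDerivAt_integral_of_dominated_of_fderiv_le
      (F' := fun x w => fderiv ℝ F (x + δ • w)) (bound := fun _ => C) (ball_mem_nhds x₀ one_pos)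
    · filter_upwards with x
      exact ((hF.continuous.comp (continuous_const.add hwcont))).aestronglyMeasurable
    · exact integrable_uniformBall (hF.continuous.comp (continuous_const.add hwcont))
    · exact (hint_fderiv x₀).aestronglyMeasurable
    · filter_upwards [ae_norm_le] with w hw
      intro x hx
      exact hC _ (hmove w hw x hx)
    · exact integrable_const C
    · filter_upwards with w
      intro x hx
      exact hasFDerivAt_comp_add _ x (hF.differentiable (by norm_num) _)
  have heq : (∫ w, fderiv ℝ F (x₀ + δ • w) ∂μ)
      = toDual ℝ (EuclideanSpace ℝ (Fin d)) (∫ w, gradient F (x₀ + δ • w) ∂μ) := by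
    have hintg : Integrable (fun w => gradient F (x₀ + δ • w)) μ :=
      integrable_uniformBall (((contDiff_gradient hF).continuous).comp
        (continuous_const.add hwcont))
    ext v
    rw [ContinuousLinearMap.integral_apply (hint_fderiv x₀), toDual_apply_apply,
      real_inner_comm, ← integral_inner hintg]
    refine integral_congr_ae (Filter.Eventually.of_forall fun w => ?_)
    show (fderiv ℝ F (x₀ + δ • w)) v = ⟪v, gradient F (x₀ + δ • w)⟫_ℝ
    rw [← toDual_gradient' (x₀ + δ • w), toDual_apply_apply, real_inner_comm]
  rw [heq] at key
  exact hasGradientAt_iff_hasFDerivAt.mpr key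

end Aux

/-- If `F : ℝ^d → ℝ` is `C²` with `H`-Lipschitz Hessian (in operator norm),
then for every `δ > 0` the map `h(x) = ∇F^δ(x) − ∇F(x)` is `(δH)`-Lipschitz. -/
theorem stmt3 {d : ℕ} (F : EuclideanSpace ℝ (Fin d) → ℝ)
    (hF : ContDiff ℝ 2 F) (H : ℝ) (hH : 0 ≤ H)
    (hHess : ∀ x y, ‖fderiv ℝ (gradient F) x - fderiv ℝ (gradient F) y‖ ≤ H * ‖x - y‖)
    (δ : ℝ) (hδ : 0 < δ) :
    ∀ x y, ‖(gradient (ballSmooth F δ) x - gradient F x)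
        - (gradient (ballSmooth F δ) y - gradient F y)‖ ≤ (δ * H) * ‖x - y‖ := by
  intro x y
  set μ := uniformBall d
  have hgd : Differentiable ℝ (gradient F) :=
    (contDiff_gradient hF).differentiable one_ne_zero
  have hgc : Continuous (gradient F) := (contDiff_gradient hF).continuous
  have hwcont : Continuous fun w : EuclideanSpace ℝ (Fin d) => δ • w :=
    continuous_id.const_smul δ
  -- Lipschitz bound on the double difference of gradients
  have hGlip : ∀ w : EuclideanSpace ℝ (Fin d), ‖w‖ ≤ 1 →
      ‖(gradient F (x + δ • w) - gradient F x) - (gradient F (y + δ • w) - gradient F y)‖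
        ≤ (δ * H) * ‖x - y‖ := by
    intro w hw
    set G := fun z : EuclideanSpace ℝ (Fin d) => gradient F (z + δ • w) - gradient F z with hGdef
    have hG : ∀ z, HasFDerivAt G
        (fderiv ℝ (gradient F) (z + δ • w) - fderiv ℝ (gradient F) z) z := fun z =>
      (hasFDerivAt_comp_add _ z (hgd _)).sub (hgd z).hasFDerivAt
    have hb : ∀ z : EuclideanSpace ℝ (Fin d),
        ‖fderiv ℝ (gradient F) (z + δ • w) - fderiv ℝ (gradient F) z‖ ≤ δ * H := by
      intro z
      calc ‖fderiv ℝ (gradient F) (z + δ • w) - fderiv ℝ (gradient F) z‖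
          ≤ H * ‖(z + δ • w) - z‖ := hHess _ _
        _ = H * (δ * ‖w‖) := by
            rw [add_sub_cancel_left, norm_smul, Real.norm_eq_abs, abs_of_nonneg hδ.le]
        _ ≤ δ * H := by
            have h1 : δ * ‖w‖ ≤ δ := mul_le_of_le_one_right hδ.le hw
            calc H * (δ * ‖w‖) ≤ H * δ := mul_le_mul_of_nonneg_left h1 hH
              _ = δ * H := mul_comm _ _
    have := convex_univ.norm_image_sub_le_of_norm_hasFDerivWithin_le
      (f := G) (f' := fun z => fderiv ℝ (gradient F) (z + δ • w) - fderiv ℝ (gradient F) z)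
      (fun z _ => (hG z).hasFDerivWithinAt) (fun z _ => hb z)
      (Set.mem_univ y) (Set.mem_univ x)
    simpa [hGdef] using this
  have hx := (hasGradientAt_ballSmooth hF hδ x).gradient
  have hy := (hasGradientAt_ballSmooth hF hδ y).gradient
  rw [hx, hy]
  have int1 : Integrable (fun w => gradient F (x + δ • w)) μ :=
    integrable_uniformBall (hgc.comp (continuous_const.add hwcont))
  have int3 : Integrable (fun w => gradient F (y + δ • w)) μ :=
    integrable_uniformBall (hgc.comp (continuous_const.add hwcont))
  have hrw : (∫ w, gradient F (x + δ • w) ∂μ) - gradient F x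
      - ((∫ w, gradient F (y + δ • w) ∂μ) - gradient F y)
      = ∫ w, ((gradient F (x + δ • w) - gradient F x)
          - (gradient F (y + δ • w) - gradient F y)) ∂μ := by
    have i12 : Integrable (fun w => gradient F (x + δ • w) - gradient F x) μ :=
      int1.sub (integrable_const _)
    have i34 : Integrable (fun w => gradient F (y + δ • w) - gradient F y) μ :=
      int3.sub (integrable_const _)
    rw [integral_sub i12 i34, integral_sub int1 (integrable_const _),
      integral_sub int3 (integrable_const _), integral_const, integral_const]
    simp [measure_univ]
  rw [hrw]
  calc ‖∫ w, ((gradient F (x + δ • w) - gradient F x)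
          - (gradient F (y + δ • w) - gradient F y)) ∂μ‖
      ≤ ∫ _w, (δ * H) * ‖x - y‖ ∂μ := by
        refine norm_integral_le_of_norm_le (integrable_const _) ?_
        filter_upwards [ae_norm_le] with w hw
        exact hGlip w hw
    _ = (δ * H) * ‖x - y‖ := by simp [measure_univ]
end

section
/- Let K ⊆ ℝ^d be a nonempty closed convex set, let F₁ : ℝ^d → ℝ be differentiable and α-strongly convex, and let F₂ : ℝ^d → ℝ be differentiable. Let x₁ ∈ K be the minimizer of F₁ over K and let x₂ ∈ K satisfy the first-order condition ⟨∇F₂(x₂), x − x₂⟩ ≥ 0 for all x ∈ K. If ‖∇F₂(x₂) − ∇F₁(x₂)‖ ≤ ε, then ‖x₁ − x₂‖ ≤ ε/α. -/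
open RealInnerProductSpace

/-- Let `K ⊆ ℝ^d` be nonempty closed convex, `F₁` differentiable and
`α`-strongly convex with minimizer `x₁` over `K`, and `F₂` differentiable with `x₂ ∈ K`
satisfying the first-order condition `⟨∇F₂(x₂), x − x₂⟩ ≥ 0` for all `x ∈ K`. If
`‖∇F₂(x₂) − ∇F₁(x₂)‖ ≤ ε` then `‖x₁ − x₂‖ ≤ ε/α`. -/
theorem stmt7 {d : ℕ} (K : Set (EuclideanSpace ℝ (Fin d)))
    (hKne : K.Nonempty) (hKcl : IsClosed K) (hKcv : Convex ℝ K)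
    (F₁ F₂ : EuclideanSpace ℝ (Fin d) → ℝ)
    (hF₁ : Differentiable ℝ F₁) (hF₂ : Differentiable ℝ F₂)
    (α : ℝ) (hα : 0 < α)
    (hsc : ∀ x y, α * ‖x - y‖ ^ 2 ≤ ⟪gradient F₁ x - gradient F₁ y, x - y⟫)
    (x₁ : EuclideanSpace ℝ (Fin d)) (hx₁K : x₁ ∈ K) (hx₁ : IsMinOn F₁ K x₁)
    (x₂ : EuclideanSpace ℝ (Fin d)) (hx₂K : x₂ ∈ K)
    (hfoc : ∀ x ∈ K, 0 ≤ ⟪gradient F₂ x₂, x - x₂⟫)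
    (ε : ℝ) (hε : 0 ≤ ε)
    (hclose : ‖gradient F₂ x₂ - gradient F₁ x₂‖ ≤ ε) :
    ‖x₁ - x₂‖ ≤ ε / α := by
  -- first-order condition at x₁ for F₁
  have hfoc1 : 0 ≤ ⟪gradient F₁ x₁, x₂ - x₁⟫ := by
    have htan : x₂ - x₁ ∈ posTangentConeAt K x₁ :=
      sub_mem_posTangentConeAt_of_segment_subset (hKcv.segment_subset hx₁K hx₂K)
    have hfd : HasFDerivWithinAt F₁
        (InnerProductSpace.toDual ℝ _ (gradient F₁ x₁)) K x₁ :=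
      ((hF₁ x₁).hasGradientAt.hasFDerivAt).hasFDerivWithinAt
    have := hx₁.localize.hasFDerivWithinAt_nonneg hfd htan
    simpa [InnerProductSpace.toDual_apply_apply] using this
  have key : α * ‖x₁ - x₂‖ ^ 2 ≤ ε * ‖x₁ - x₂‖ := by
    calc α * ‖x₁ - x₂‖ ^ 2 ≤ ⟪gradient F₁ x₁ - gradient F₁ x₂, x₁ - x₂⟫ := hsc x₁ x₂
    _ = -⟪gradient F₁ x₁, x₂ - x₁⟫ - ⟪gradient F₂ x₂, x₁ - x₂⟫
        + ⟪gradient F₂ x₂ - gradient F₁ x₂, x₁ - x₂⟫ := by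
        rw [inner_sub_left, inner_sub_left]
        have h : ⟪gradient F₁ x₁, x₂ - x₁⟫ = -⟪gradient F₁ x₁, x₁ - x₂⟫ := by
          rw [← inner_neg_right]; congr 1; abel
        linarith [h]
    _ ≤ -0 - 0 + ⟪gradient F₂ x₂ - gradient F₁ x₂, x₁ - x₂⟫ := by
        have h1 := hfoc x₁ hx₁K
        linarith
    _ ≤ ‖gradient F₂ x₂ - gradient F₁ x₂‖ * ‖x₁ - x₂‖ := by
        simpa using real_inner_le_norm (gradient F₂ x₂ - gradient F₁ x₂) (x₁ - x₂)
    _ ≤ ε * ‖x₁ - x₂‖ :=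
        mul_le_mul_of_nonneg_right hclose (norm_nonneg _)
  rcases eq_or_lt_of_le (norm_nonneg (x₁ - x₂)) with h0 | h0
  · rw [← h0]; positivity
  · rw [le_div_iff₀ hα]
    nlinarith
end

section
/- Let X ⊆ ℝ^d be a nonempty closed convex set, and let F : ℝ^d → ℝ be differentiable, α-strongly convex, with G-Lipschitz gradient. Let x* be the minimizer of F over X, and for δ ∈ (0,1) let x̃ be the minimizer of F over the shrunken set (1−δ)X = {(1−δ)x : x ∈ X}. Then ‖x* − x̃‖ ≤ δ(1 + G/α)‖x*‖. -/
open RealInnerProductSpace Pointwise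

/-- Variational inequality: at a minimizer of a differentiable function on a convex set,
the gradient has nonnegative inner product with any feasible direction. -/
lemma varineq {d : ℕ} {s : Set (EuclideanSpace ℝ (Fin d))} (hs : Convex ℝ s)
    {F : EuclideanSpace ℝ (Fin d) → ℝ} (hF : Differentiable ℝ F)
    {a : EuclideanSpace ℝ (Fin d)} (ha : a ∈ s) (hmin : IsMinOn F s a)
    {z : EuclideanSpace ℝ (Fin d)} (hz : z ∈ s) :
    0 ≤ ⟪gradient F a, z - a⟫ := by
  have hcone : z - a ∈ posTangentConeAt s a :=
    sub_mem_posTangentConeAt_of_segment_subset (hs.segment_subset ha hz)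
  have hfd : HasFDerivWithinAt F (InnerProductSpace.toDual ℝ _ (gradient F a)) s a :=
    ((hF a).hasGradientAt.hasFDerivAt).hasFDerivWithinAt
  simpa using hmin.localize.hasFDerivWithinAt_nonneg hfd hcone

/-- Let `X ⊆ ℝ^d` be nonempty closed convex, `F` differentiable,
`α`-strongly convex with `G`-Lipschitz gradient, `x*` the minimizer of `F` over `X` and
`x̃` the minimizer of `F` over the shrunken set `(1−δ)X`, where `δ ∈ (0,1)`. Then
`‖x* − x̃‖ ≤ δ(1 + G/α)‖x*‖`. -/
theorem stmt8 {d : ℕ} (X : Set (EuclideanSpace ℝ (Fin d)))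
    (hXne : X.Nonempty) (hXcl : IsClosed X) (hXcv : Convex ℝ X)
    (F : EuclideanSpace ℝ (Fin d) → ℝ) (hF : Differentiable ℝ F)
    (α G : ℝ) (hα : 0 < α) (hG : 0 ≤ G)
    (hsc : ∀ x y, α * ‖x - y‖ ^ 2 ≤ ⟪gradient F x - gradient F y, x - y⟫)
    (hGlip : ∀ x y, ‖gradient F x - gradient F y‖ ≤ G * ‖x - y‖)
    (δ : ℝ) (hδ0 : 0 < δ) (hδ1 : δ < 1)
    (xstar : EuclideanSpace ℝ (Fin d)) (hxsX : xstar ∈ X) (hxs : IsMinOn F X xstar)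
    (xtil : EuclideanSpace ℝ (Fin d)) (hxtX : xtil ∈ (1 - δ) • X)
    (hxt : IsMinOn F ((1 - δ) • X) xtil) :
    ‖xstar - xtil‖ ≤ δ * (1 + G / α) * ‖xstar‖ := by
  have hδ' : (0:ℝ) < 1 - δ := by linarith
  set y : EuclideanSpace ℝ (Fin d) := (1 - δ) • xstar with hy
  -- y ∈ (1-δ) • X
  have hyX : y ∈ (1 - δ) • X := Set.smul_mem_smul_set hxsX
  -- the shrunken set is convex
  have hXcv' : Convex ℝ ((1 - δ) • X) := hXcv.smul _
  -- xtil = (1-δ) • u for some u ∈ X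
  obtain ⟨u, huX, hu⟩ := hxtX
  -- VI at xtil with point y
  have vi1 : 0 ≤ ⟪gradient F xtil, y - xtil⟫ :=
    varineq hXcv' hF (hu ▸ Set.smul_mem_smul_set huX) hxt hyX
  -- VI at xstar with point u
  have vi2 : 0 ≤ ⟪gradient F xstar, u - xstar⟫ := varineq hXcv hF hxsX hxs huX
  -- scale vi2: xtil - y = (1-δ) • (u - xstar)
  have hscale : xtil - y = (1 - δ) • (u - xstar) := by
    rw [← hu, hy, smul_sub]
  have vi2' : 0 ≤ ⟪gradient F xstar, xtil - y⟫ := by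
    rw [hscale, real_inner_smul_right]
    positivity
  -- strong convexity at (xtil, y)
  have hsc' := hsc xtil y
  have key : α * ‖xtil - y‖ ^ 2 ≤ ⟪gradient F xstar - gradient F y, xtil - y⟫ := by
    have h1 : ⟪gradient F xtil - gradient F y, xtil - y⟫
        ≤ ⟪gradient F xstar - gradient F y, xtil - y⟫ := by
      rw [inner_sub_left, inner_sub_left]
      have : ⟪gradient F xtil, xtil - y⟫ ≤ ⟪gradient F xstar, xtil - y⟫ := by
        have h2 : ⟪gradient F xtil, xtil - y⟫ ≤ 0 := by
          have := vi1
          rw [show y - xtil = -(xtil - y) by abel, inner_neg_right] at this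
          linarith
        linarith [vi2']
      linarith
    linarith
  have hCS : ⟪gradient F xstar - gradient F y, xtil - y⟫
      ≤ ‖gradient F xstar - gradient F y‖ * ‖xtil - y‖ := real_inner_le_norm _ _
  have hlip : ‖gradient F xstar - gradient F y‖ ≤ G * ‖xstar - y‖ := hGlip xstar y
  have hxy : ‖xstar - y‖ = δ * ‖xstar‖ := by
    rw [hy, show xstar - (1 - δ) • xstar = δ • xstar by
      rw [sub_smul, one_smul]; abel]
    rw [norm_smul, Real.norm_eq_abs, abs_of_pos hδ0]
  -- conclude ‖xtil - y‖ ≤ (G/α) δ ‖xstar‖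
  have hbound : ‖xtil - y‖ ≤ G / α * (δ * ‖xstar‖) := by
    rcases eq_or_lt_of_le (norm_nonneg (xtil - y)) with h0 | h0
    · rw [← h0]; positivity
    · have : α * ‖xtil - y‖ ^ 2 ≤ G * (δ * ‖xstar‖) * ‖xtil - y‖ := by
        calc α * ‖xtil - y‖ ^ 2 ≤ ‖gradient F xstar - gradient F y‖ * ‖xtil - y‖ :=
              le_trans key hCS
          _ ≤ G * (δ * ‖xstar‖) * ‖xtil - y‖ := by
              apply mul_le_mul_of_nonneg_right _ (norm_nonneg _)
              rw [← hxy] at *; linarith [hGlip xstar y]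
      have h3 : α * ‖xtil - y‖ ≤ G * (δ * ‖xstar‖) := by
        have := mul_le_mul_of_nonneg_right (le_of_lt h0) (le_refl (0:ℝ))
        nlinarith [sq_nonneg (‖xtil - y‖)]
      rw [div_mul_eq_mul_div, le_div_iff₀ hα]
      linarith
  -- triangle inequality
  calc ‖xstar - xtil‖ = ‖(xstar - y) + (y - xtil)‖ := by rw [sub_add_sub_cancel]
    _ ≤ ‖xstar - y‖ + ‖y - xtil‖ := norm_add_le _ _
    _ ≤ δ * ‖xstar‖ + G / α * (δ * ‖xstar‖) := by
        rw [hxy, norm_sub_rev]; linarith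
    _ = δ * (1 + G / α) * ‖xstar‖ := by ring
end

section
/- Let X ⊆ ℝ^d be a nonempty closed convex set, let F : ℝ^d → ℝ be differentiable, α-strongly convex, with G-Lipschitz gradient, and let x* be the minimizer of F over X. Fix x ∈ X, a step size η with 0 < η ≤ α/(4G²), and constants σ, C ≥ 0 with C² ≤ αησ². Let ĝ be a square-integrable random vector in ℝ^d with mean μ = E[ĝ] satisfying E‖ĝ − μ‖² ≤ σ² and ‖μ − ∇F(x)‖ ≤ C. Then the updated point x⁺ = proj_X(x − η ĝ) satisfies E‖x⁺ − x*‖² ≤ (1/(1 + ηα))‖x − x*‖² + 4η²σ²/(1 + ηα). -/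
open MeasureTheory RealInnerProductSpace

private lemma aux_le_zero {c K : ℝ} (hK : 0 ≤ K)
    (h : ∀ t : ℝ, 0 < t → t ≤ 1 → c ≤ t * K) : c ≤ 0 := by
  by_contra hc
  push_neg at hc
  rcases eq_or_lt_of_le hK with hK0 | hK0
  · have := h 1 one_pos le_rfl
    rw [← hK0] at this
    linarith
  · have ht0 : 0 < min 1 (c / (2 * K)) := lt_min one_pos (by positivity)
    have := h _ ht0 (min_le_left _ _)
    have h2 : min 1 (c / (2 * K)) * K ≤ (c / (2 * K)) * K :=
      mul_le_mul_of_nonneg_right (min_le_right _ _) hK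
    have h3 : (c / (2 * K)) * K = c / 2 := by field_simp
    linarith

private lemma line_hasDerivAt {d : ℕ} (F : EuclideanSpace ℝ (Fin d) → ℝ)
    (hF : Differentiable ℝ F) (p v : EuclideanSpace ℝ (Fin d)) (t : ℝ) :
    HasDerivAt (fun s : ℝ => F (p + s • v)) ⟪gradient F (p + t • v), v⟫ t := by
  have hline : HasDerivAt (fun s : ℝ => p + s • v) v t := by
    simpa using ((hasDerivAt_id t).smul_const v).const_add p
  have hfd := ((hF (p + t • v)).hasGradientAt).hasFDerivAt
  have := hfd.comp_hasDerivAt t hline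
  simpa [InnerProductSpace.toDual_apply_apply, Function.comp_def] using this

private lemma sc_lower {d : ℕ} {F : EuclideanSpace ℝ (Fin d) → ℝ}
    (hF : Differentiable ℝ F) {α : ℝ}
    (hsc : ∀ x y, α * ‖x - y‖ ^ 2 ≤ ⟪gradient F x - gradient F y, x - y⟫)
    (p q : EuclideanSpace ℝ (Fin d)) :
    F p + ⟪gradient F p, q - p⟫ + α / 2 * ‖q - p‖ ^ 2 ≤ F q := by
  set v := q - p with hv
  set φ : ℝ → ℝ := fun s => F (p + s • v) - s * ⟪gradient F p, v⟫ - α / 2 * (s ^ 2 * ‖v‖ ^ 2)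
    with hφ
  have hderiv : ∀ s : ℝ, HasDerivAt φ
      (⟪gradient F (p + s • v), v⟫ - ⟪gradient F p, v⟫ - α / 2 * (2 * s ^ 1 * ‖v‖ ^ 2)) s := by
    intro s
    exact ((line_hasDerivAt F hF p v s).sub (hasDerivAt_mul_const _)).sub
      (((hasDerivAt_pow 2 s).mul_const _).const_mul _)
  have hmono : MonotoneOn φ (Set.Icc (0:ℝ) 1) := by
    apply monotoneOn_of_deriv_nonneg (convex_Icc 0 1)
    · exact fun s _ => ((hderiv s).differentiableAt).continuousAt.continuousWithinAt
    · exact fun s _ => ((hderiv s).differentiableAt).differentiableWithinAt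
    · intro s hs
      rw [interior_Icc] at hs
      rw [(hderiv s).deriv]
      have h1 := hsc (p + s • v) p
      have h2 : (p + s • v) - p = s • v := by abel
      rw [h2, norm_smul, real_inner_smul_right, inner_sub_left] at h1
      have h3 : (‖s‖ * ‖v‖) ^ 2 = s ^ 2 * ‖v‖ ^ 2 := by
        rw [mul_pow, Real.norm_eq_abs, sq_abs]
      rw [h3] at h1
      nlinarith [hs.1, sq_nonneg ‖v‖]
  have h01 := hmono (Set.mem_Icc.2 ⟨le_refl 0, zero_le_one⟩) (Set.mem_Icc.2 ⟨zero_le_one, le_refl 1⟩) zero_le_one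
  have e0 : φ 0 = F p := by simp [hφ]
  have e1 : φ 1 = F q - ⟪gradient F p, v⟫ - α / 2 * ‖v‖ ^ 2 := by
    simp [hφ, hv]
  rw [e0, e1] at h01
  linarith

private lemma smooth_upper {d : ℕ} {F : EuclideanSpace ℝ (Fin d) → ℝ}
    (hF : Differentiable ℝ F) {G : ℝ} (hG : 0 ≤ G)
    (hGlip : ∀ x y, ‖gradient F x - gradient F y‖ ≤ G * ‖x - y‖)
    (p q : EuclideanSpace ℝ (Fin d)) :
    F q ≤ F p + ⟪gradient F p, q - p⟫ + G / 2 * ‖q - p‖ ^ 2 := by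
  set v := q - p with hv
  set φ : ℝ → ℝ := fun s => s * ⟪gradient F p, v⟫ + G / 2 * (s ^ 2 * ‖v‖ ^ 2) - F (p + s • v)
    with hφ
  have hderiv : ∀ s : ℝ, HasDerivAt φ
      (⟪gradient F p, v⟫ + G / 2 * (2 * s ^ 1 * ‖v‖ ^ 2) - ⟪gradient F (p + s • v), v⟫) s := by
    intro s
    exact ((hasDerivAt_mul_const _).add
      (((hasDerivAt_pow 2 s).mul_const _).const_mul _)).sub (line_hasDerivAt F hF p v s)
  have hmono : MonotoneOn φ (Set.Icc (0:ℝ) 1) := by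
    apply monotoneOn_of_deriv_nonneg (convex_Icc 0 1)
    · exact fun s _ => ((hderiv s).differentiableAt).continuousAt.continuousWithinAt
    · exact fun s _ => ((hderiv s).differentiableAt).differentiableWithinAt
    · intro s hs
      rw [interior_Icc] at hs
      rw [(hderiv s).deriv]
      have h1 := hGlip (p + s • v) p
      have h2 : (p + s • v) - p = s • v := by abel
      rw [h2, norm_smul] at h1
      have h4 : ⟪gradient F (p + s • v) - gradient F p, v⟫ ≤ ‖gradient F (p + s • v) - gradient F p‖ * ‖v‖ :=
        real_inner_le_norm _ _
      rw [inner_sub_left] at h4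
      have h5 : ‖s‖ = s := by rw [Real.norm_eq_abs, abs_of_pos hs.1]
      rw [h5] at h1
      have h6 : ‖gradient F (p + s • v) - gradient F p‖ * ‖v‖ ≤ G * (s * ‖v‖) * ‖v‖ :=
        mul_le_mul_of_nonneg_right h1 (norm_nonneg _)
      nlinarith [hs.1]
  have h01 := hmono (Set.mem_Icc.2 ⟨le_refl 0, zero_le_one⟩) (Set.mem_Icc.2 ⟨zero_le_one, le_refl 1⟩) zero_le_one
  have e0 : φ 0 = - F p := by simp [hφ]
  have e1 : φ 1 = ⟪gradient F p, v⟫ + G / 2 * ‖v‖ ^ 2 - F q := by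
    simp [hφ, hv]
  rw [e0, e1] at h01
  linarith

private lemma opt_cond {d : ℕ} {F : EuclideanSpace ℝ (Fin d) → ℝ}
    (hF : Differentiable ℝ F) {G : ℝ} (hG : 0 ≤ G)
    (hGlip : ∀ x y, ‖gradient F x - gradient F y‖ ≤ G * ‖x - y‖)
    {X : Set (EuclideanSpace ℝ (Fin d))} (hXcv : Convex ℝ X)
    {xstar : EuclideanSpace ℝ (Fin d)} (hxsX : xstar ∈ X) (hxs : IsMinOn F X xstar)
    {y : EuclideanSpace ℝ (Fin d)} (hy : y ∈ X) :
    0 ≤ ⟪gradient F xstar, y - xstar⟫ := by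
  have hkey : -⟪gradient F xstar, y - xstar⟫ ≤ 0 := by
    apply aux_le_zero (K := G / 2 * ‖y - xstar‖ ^ 2) (by positivity)
    intro t ht0 ht1
    have hq : xstar + t • (y - xstar) ∈ X := hXcv.add_smul_sub_mem hxsX hy ⟨ht0.le, ht1⟩
    have h1 := smooth_upper hF hG hGlip xstar (xstar + t • (y - xstar))
    have h2 : xstar + t • (y - xstar) - xstar = t • (y - xstar) := by abel
    rw [h2, real_inner_smul_right, norm_smul, mul_pow, Real.norm_eq_abs, sq_abs] at h1
    have h3 : F xstar ≤ F (xstar + t • (y - xstar)) := isMinOn_iff.mp hxs _ hq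
    have h4 : 0 ≤ t * ⟪gradient F xstar, y - xstar⟫ + G / 2 * (t ^ 2 * ‖y - xstar‖ ^ 2) := by
      nlinarith
    nlinarith [sq_nonneg ‖y - xstar‖]
  linarith

private lemma final_arith {t r2 η σ : ℝ} (ht0 : 0 < t) (ht : t ≤ 1/4) (hr : 0 ≤ r2) :
    (1 - t) * r2 + η ^ 2 * σ ^ 2 + 4 / 3 * η ^ 2 * σ ^ 2
      ≤ 1 / (1 + t) * r2 + 4 * η ^ 2 * σ ^ 2 / (1 + t) := by
  have h1 : (0:ℝ) < 1 + t := by linarith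
  have hcomb : 1 / (1 + t) * r2 + 4 * η ^ 2 * σ ^ 2 / (1 + t)
      = (r2 + 4 * (η ^ 2 * σ ^ 2)) / (1 + t) := by
    field_simp
  rw [hcomb, le_div_iff₀ h1]
  nlinarith [mul_nonneg (mul_nonneg ht0.le ht0.le) hr,
    mul_nonneg ht0.le (mul_nonneg (sq_nonneg η) (sq_nonneg σ)),
    mul_nonneg (sq_nonneg η) (sq_nonneg σ)]

set_option maxHeartbeats 1000000 in
/-- One-step contraction of the epoch-based first-order method: for `F`
differentiable, `α`-strongly convex with `G`-Lipschitz gradient and minimizer `x*` over a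
nonempty closed convex set `X`, a point `x ∈ X`, step size `0 < η ≤ α/(4G²)`, and a
square-integrable stochastic gradient `ĝ` with variance at most `σ²` and bias
`‖E ĝ − ∇F(x)‖ ≤ C` where `C² ≤ αησ²`, the projected update `x⁺ = proj_X(x − η ĝ)` satisfies
`E‖x⁺ − x*‖² ≤ ‖x − x*‖²/(1 + ηα) + 4η²σ²/(1 + ηα)`. -/
theorem stmt15 {d : ℕ} {Ω : Type*} [MeasurableSpace Ω]
    (μ : Measure Ω) [IsProbabilityMeasure μ]
    (X : Set (EuclideanSpace ℝ (Fin d)))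
    (hXne : X.Nonempty) (hXcl : IsClosed X) (hXcv : Convex ℝ X)
    (F : EuclideanSpace ℝ (Fin d) → ℝ) (hF : Differentiable ℝ F)
    (α G : ℝ) (hα : 0 < α) (hG : 0 ≤ G)
    (hsc : ∀ x y, α * ‖x - y‖ ^ 2 ≤ ⟪gradient F x - gradient F y, x - y⟫)
    (hGlip : ∀ x y, ‖gradient F x - gradient F y‖ ≤ G * ‖x - y‖)
    (xstar : EuclideanSpace ℝ (Fin d)) (hxsX : xstar ∈ X) (hxs : IsMinOn F X xstar)
    (x : EuclideanSpace ℝ (Fin d)) (hx : x ∈ X)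
    (η σ C : ℝ) (hη0 : 0 < η) (hη : η ≤ α / (4 * G ^ 2)) (hσ : 0 ≤ σ) (hC : 0 ≤ C)
    (hCσ : C ^ 2 ≤ α * η * σ ^ 2)
    (g : Ω → EuclideanSpace ℝ (Fin d)) (hg : MemLp g 2 μ)
    (hbias : ‖(∫ ω, g ω ∂μ) - gradient F x‖ ≤ C)
    (hvar : ∫ ω, ‖g ω - ∫ ω', g ω' ∂μ‖ ^ 2 ∂μ ≤ σ ^ 2)
    (xp : Ω → EuclideanSpace ℝ (Fin d))
    (hxp : ∀ ω, xp ω ∈ X ∧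
      ∀ y ∈ X, ‖xp ω - (x - η • g ω)‖ ≤ ‖y - (x - η • g ω)‖) :
    ∫ ω, ‖xp ω - xstar‖ ^ 2 ∂μ
      ≤ (1 / (1 + η * α)) * ‖x - xstar‖ ^ 2 + 4 * η ^ 2 * σ ^ 2 / (1 + η * α) := by
  have h1pos : (0:ℝ) < 1 + η * α := by nlinarith
  rcases Nat.eq_zero_or_pos d with hd | hd
  · -- trivial case d = 0
    subst hd
    have h0 : ∀ ω, ‖xp ω - xstar‖ = 0 := by
      intro ω
      simp [EuclideanSpace.norm_eq]
    have : (∫ ω, ‖xp ω - xstar‖ ^ 2 ∂μ) = 0 := by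
      simp only [h0]
      simp
    rw [this]
    apply add_nonneg
    · exact mul_nonneg (by positivity) (by positivity)
    · exact div_nonneg (by positivity) h1pos.le
  -- main case
  obtain ⟨i⟩ : Nonempty (Fin d) := ⟨⟨0, hd⟩⟩
  have hαG : α ≤ G := by
    set u := EuclideanSpace.single i (1:ℝ) with hu
    have hnu : ‖u‖ = 1 := by simp [hu, EuclideanSpace.norm_single]
    have h1 := hsc u 0
    have h2 := real_inner_le_norm (gradient F u - gradient F 0) (u - 0)
    have h3 := hGlip u 0
    rw [sub_zero, hnu] at h1 h2 h3
    nlinarith [norm_nonneg (gradient F u - gradient F 0)]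
  have hG0 : 0 < G := lt_of_lt_of_le hα hαG
  have hηG2 : η * G ^ 2 ≤ α / 4 := by
    have := (le_div_iff₀ (by positivity : (0:ℝ) < 4 * G ^ 2)).mp hη
    linarith
  have hηG : η * G ≤ 1 / 4 := by nlinarith [mul_pos hη0 hG0]
  have hηα : η * α ≤ 1 / 4 := by nlinarith [mul_nonneg hη0.le (sub_nonneg.2 hαG)]
  set m := ∫ ω, g ω ∂μ with hm
  set v := gradient F x with hvdef
  -- pointwise master inequality
  have key : ∀ ω, ‖xp ω - xstar‖ ^ 2 ≤
      (1 - η * α) * ‖x - xstar‖ ^ 2 + η ^ 2 * σ ^ 2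
        + (4/3) * η ^ 2 * ‖g ω - m‖ ^ 2 + 2 * η * ⟪xstar - x, g ω - m⟫ := by
    intro ω
    have hpX := (hxp ω).1
    set p := xp ω with hp
    set w := g ω with hw
    -- variational inequality for the projection
    have hVI : ⟪(x - η • w) - p, xstar - p⟫ ≤ 0 := by
      have hkey : 2 * ⟪(x - η • w) - p, xstar - p⟫ ≤ 0 := by
        apply aux_le_zero (K := ‖xstar - p‖ ^ 2) (by positivity)
        intro t ht0 ht1
        have hyX : p + t • (xstar - p) ∈ X := hXcv.add_smul_sub_mem hpX hxsX ⟨ht0.le, ht1⟩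
        have hle := (hxp ω).2 _ hyX
        have hsq := pow_le_pow_left₀ (norm_nonneg _) hle 2
        have hexp : ‖(p + t • (xstar - p)) - (x - η • w)‖ ^ 2
            = ‖p - (x - η • w)‖ ^ 2 + 2 * (t * ⟪p - (x - η • w), xstar - p⟫)
              + t ^ 2 * ‖xstar - p‖ ^ 2 := by
          have e : (p + t • (xstar - p)) - (x - η • w) = (p - (x - η • w)) + t • (xstar - p) := by
            abel
          rw [e, norm_add_sq_real, real_inner_smul_right, norm_smul, mul_pow,
            Real.norm_eq_abs, sq_abs]
        rw [hexp] at hsq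
        have hflip : ⟪p - (x - η • w), xstar - p⟫ = -⟪(x - η • w) - p, xstar - p⟫ := by
          rw [show p - (x - η • w) = -((x - η • w) - p) by abel, inner_neg_left]
        rw [hflip] at hsq
        nlinarith
      linarith
    -- three-point inequality
    have h3pt : ‖p - xstar‖ ^ 2 ≤ ‖x - xstar‖ ^ 2 - ‖x - p‖ ^ 2 + 2 * η * ⟪w, xstar - p⟫ := by
      have hid : ‖x - xstar‖ ^ 2 = ‖x - p‖ ^ 2 + 2 * ⟪x - p, p - xstar⟫ + ‖p - xstar‖ ^ 2 := by
        rw [show x - xstar = (x - p) + (p - xstar) by abel, norm_add_sq_real]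
      have hVI' : ⟪x - p, xstar - p⟫ - η * ⟪w, xstar - p⟫ ≤ 0 := by
        have e : ⟪(x - η • w) - p, xstar - p⟫
            = ⟪x - p, xstar - p⟫ - η * ⟪w, xstar - p⟫ := by
          rw [show (x - η • w) - p = (x - p) - η • w by abel, inner_sub_left,
            real_inner_smul_left]
        have hVI2 := hVI
        rw [e] at hVI2
        linarith
      have hflip2 : ⟪x - p, p - xstar⟫ = -⟪x - p, xstar - p⟫ := by
        rw [show p - xstar = -(xstar - p) by abel, inner_neg_right]
      nlinarith [hid, hVI', hflip2]
    -- lower bound on the inner product with the gradient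
    have hb1 := sc_lower hF hsc x xstar
    have hb2 := smooth_upper hF hG hGlip x p
    have hb3 := sc_lower hF hsc xstar p
    have hb3' : 0 ≤ ⟪gradient F xstar, p - xstar⟫ := opt_cond hF hG hGlip hXcv hxsX hxs hpX
    have hb4 : ⟪m - v, xstar - p⟫ ≤ C * ‖p - xstar‖ := by
      calc ⟪m - v, xstar - p⟫ ≤ ‖m - v‖ * ‖xstar - p‖ := real_inner_le_norm _ _
        _ ≤ C * ‖p - xstar‖ := by
            rw [norm_sub_rev xstar p]
            exact mul_le_mul_of_nonneg_right hbias (norm_nonneg _)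
    have hb5 : ⟪w - m, x - p⟫ ≤ ‖w - m‖ * ‖x - p‖ := real_inner_le_norm _ _
    have hdec : ⟪w, xstar - p⟫
        = ⟪w - m, xstar - x⟫ + ⟪w - m, x - p⟫ + ⟪m - v, xstar - p⟫
          + ⟪v, xstar - x⟫ - ⟪v, p - x⟫ := by
      simp only [inner_sub_left, inner_sub_right]
      ring
    have hnrev1 : ‖xstar - x‖ = ‖x - xstar‖ := norm_sub_rev _ _
    have hnrev2 : ‖p - x‖ = ‖x - p‖ := norm_sub_rev _ _
    rw [hnrev1] at hb1
    rw [hnrev2] at hb2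
    -- combine: bound on ⟪w, xstar - p⟫
    have hS : ⟪w, xstar - p⟫ ≤ ⟪w - m, xstar - x⟫ + ‖w - m‖ * ‖x - p‖ + C * ‖p - xstar‖
        - (α/2) * ‖p - xstar‖ ^ 2 - (α/2) * ‖x - xstar‖ ^ 2 + (G/2) * ‖x - p‖ ^ 2 := by
      have hFbound : F x - F xstar + (α/2) * ‖x - xstar‖ ^ 2 ≤ ⟪v, x - xstar⟫ := by
        have : ⟪v, xstar - x⟫ = -⟪v, x - xstar⟫ := by
          rw [show xstar - x = -(x - xstar) by abel, inner_neg_right]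
        linarith [hb1, this]
      have hvx : ⟪v, xstar - x⟫ = -⟪v, x - xstar⟫ := by
        rw [show xstar - x = -(x - xstar) by abel, inner_neg_right]
      linarith [hb1, hb2, hb3, hb3', hb4, hb5, hdec, hvx]
    have hS2 : 2 * η * ⟪w, xstar - p⟫ ≤ 2 * η *
        (⟪w - m, xstar - x⟫ + ‖w - m‖ * ‖x - p‖ + C * ‖p - xstar‖
          - (α/2) * ‖p - xstar‖ ^ 2 - (α/2) * ‖x - xstar‖ ^ 2 + (G/2) * ‖x - p‖ ^ 2) :=
      mul_le_mul_of_nonneg_left hS (by positivity)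
    have am1 : 2 * η * (‖w - m‖ * ‖x - p‖)
        ≤ (3/4) * ‖x - p‖ ^ 2 + (4/3) * η ^ 2 * ‖w - m‖ ^ 2 := by
      nlinarith [sq_nonneg (2 * (η * ‖w - m‖) - (3/2) * ‖x - p‖)]
    have am2 : 2 * η * (C * ‖p - xstar‖) ≤ η * α * ‖p - xstar‖ ^ 2 + η ^ 2 * σ ^ 2 := by
      nlinarith [mul_nonneg hη0.le (sq_nonneg (α * ‖p - xstar‖ - C)),
        mul_le_mul_of_nonneg_left hCσ hη0.le, hα, mul_pos hη0 hα]
    have hG4 : 2 * η * ((G/2) * ‖x - p‖ ^ 2) ≤ (1/4) * ‖x - p‖ ^ 2 := by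
      nlinarith [sq_nonneg ‖x - p‖]
    have hcomm : ⟪w - m, xstar - x⟫ = ⟪xstar - x, w - m⟫ := real_inner_comm _ _
    rw [hcomm] at hS2
    linarith [h3pt, hS2, am1, am2, hG4]
  -- integration
  have hgi : Integrable g μ := hg.integrable one_le_two
  have hξmem : MemLp (fun ω => g ω - m) 2 μ := hg.sub (memLp_const m)
  have hξi : Integrable (fun ω => g ω - m) μ := hgi.sub (integrable_const m)
  have hξ0 : (∫ ω, (g ω - m) ∂μ) = 0 := by
    rw [integral_sub hgi (integrable_const m)]
    simp [← hm]
  have hξ2i : Integrable (fun ω => ‖g ω - m‖ ^ 2) μ := by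
    have h := hξmem.integrable_norm_rpow two_ne_zero ENNReal.ofNat_ne_top
    apply h.congr
    filter_upwards with ω
    have e2 : ENNReal.toReal 2 = ((2:ℕ):ℝ) := by simp
    rw [e2, Real.rpow_natCast]
  have hinneri : Integrable (fun ω => ⟪xstar - x, g ω - m⟫) μ := by
    exact Integrable.const_inner (𝕜 := ℝ) (xstar - x) hξi
  have hInt : Integrable (fun ω => (1 - η * α) * ‖x - xstar‖ ^ 2 + η ^ 2 * σ ^ 2
      + (4/3) * η ^ 2 * ‖g ω - m‖ ^ 2 + 2 * η * ⟪xstar - x, g ω - m⟫) μ := by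
    exact (((integrable_const _).add (hξ2i.const_mul _)).add (hinneri.const_mul _))
  have hmono := integral_mono_of_nonneg (ae_of_all _ fun ω => by positivity)
    hInt (ae_of_all _ key)
  have hcalc : (∫ ω, ((1 - η * α) * ‖x - xstar‖ ^ 2 + η ^ 2 * σ ^ 2
      + (4/3) * η ^ 2 * ‖g ω - m‖ ^ 2 + 2 * η * ⟪xstar - x, g ω - m⟫) ∂μ)
      = ((1 - η * α) * ‖x - xstar‖ ^ 2 + η ^ 2 * σ ^ 2)
        + (4/3) * η ^ 2 * (∫ ω, ‖g ω - m‖ ^ 2 ∂μ) + 2 * η * ⟪xstar - x, (0:EuclideanSpace ℝ (Fin d))⟫ := by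
    have I3 : Integrable (fun ω => (4/3) * η ^ 2 * ‖g ω - m‖ ^ 2) μ := hξ2i.const_mul _
    have I0 : Integrable (fun _ : Ω => (1 - η * α) * ‖x - xstar‖ ^ 2 + η ^ 2 * σ ^ 2) μ :=
      integrable_const _
    have I1 : Integrable (fun ω => (1 - η * α) * ‖x - xstar‖ ^ 2 + η ^ 2 * σ ^ 2
        + (4/3) * η ^ 2 * ‖g ω - m‖ ^ 2) μ := I0.add I3
    have I2 : Integrable (fun ω => 2 * η * ⟪xstar - x, g ω - m⟫) μ := hinneri.const_mul _
    rw [integral_add I1 I2, integral_add I0 I3, integral_const, integral_const_mul,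
      integral_const_mul, integral_inner hξi, hξ0]
    simp
  rw [hcalc] at hmono
  have hvar' : (4/3) * η ^ 2 * (∫ ω, ‖g ω - m‖ ^ 2 ∂μ) ≤ (4/3) * η ^ 2 * σ ^ 2 :=
    mul_le_mul_of_nonneg_left hvar (by positivity)
  have hfin := final_arith (t := η * α) (r2 := ‖x - xstar‖ ^ 2) (η := η) (σ := σ)
    (mul_pos hη0 hα) hηα (sq_nonneg _)
  have hz : ⟪xstar - x, (0:EuclideanSpace ℝ (Fin d))⟫ = (0:ℝ) := inner_zero_right _
  have hmid : (1 - η * α) * ‖x - xstar‖ ^ 2 + η ^ 2 * σ ^ 2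
        + 4 / 3 * η ^ 2 * (∫ ω, ‖g ω - m‖ ^ 2 ∂μ)
        + 2 * η * ⟪xstar - x, (0:EuclideanSpace ℝ (Fin d))⟫
      ≤ (1 - η * α) * ‖x - xstar‖ ^ 2 + η ^ 2 * σ ^ 2 + 4 / 3 * η ^ 2 * σ ^ 2 := by
    rw [hz]
    linarith [hvar']
  exact le_trans hmono (le_trans hmid hfin)
end

section
/- Let K ⊆ ℝ^d be a nonempty closed convex set, let F̃ : ℝ^d → ℝ be differentiable and (α/2)-strongly convex with α > 0, and let x̄ be the minimizer of F̃ over K. Fix x ∈ K, a step size η > 0, and constants M, C ≥ 0. Let ĝ be a square-integrable random vector in ℝ^d with mean μ = E[ĝ] satisfying E‖ĝ‖² ≤ M² and ‖μ − ∇F̃(x)‖ ≤ C. Then the updated point x⁺ = proj_K(x − η ĝ) satisfies E‖x⁺ − x̄‖² ≤ (1 − ηα/2)‖x − x̄‖² + η²M² + (2η/α)C². -/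
open MeasureTheory RealInnerProductSpace


section aux
variable {E : Type*} [NormedAddCommGroup E] [InnerProductSpace ℝ E]

lemma stmt16_proj_char {K : Set E} (hKcv : Convex ℝ K) {u y : E} (hu : u ∈ K)
    (hmin : ∀ z ∈ K, ‖u - y‖ ≤ ‖z - y‖) : ∀ z ∈ K, ⟪y - u, z - u⟫ ≤ 0 := by
  haveI : Nonempty K := ⟨⟨u, hu⟩⟩
  have heq : ‖y - u‖ = ⨅ w : K, ‖y - w‖ := by
    apply le_antisymm
    · exact le_ciInf fun w => by
        rw [norm_sub_rev y u, norm_sub_rev y (w : E)]; exact hmin w w.2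
    · exact ciInf_le ⟨0, fun _ ⟨_, h⟩ => h ▸ norm_nonneg _⟩ (⟨u, hu⟩ : K)
  exact (norm_eq_iInf_iff_real_inner_le_zero hKcv hu).mp heq

lemma stmt16_uniq {y u w : E} (h1 : ⟪y - u, w - u⟫ ≤ 0) (h2 : ⟪y - w, u - w⟫ ≤ 0) :
    u = w := by
  have e : ⟪y - u, w - u⟫ + ⟪y - w, u - w⟫ = ‖w - u‖ ^ 2 := by
    rw [show u - w = -(w - u) by abel, inner_neg_right,
        show y - u = (y - w) + (w - u) by abel, inner_add_left,
        real_inner_self_eq_norm_sq]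
    ring
  have h0 : ‖w - u‖ = 0 := by nlinarith [norm_nonneg (w - u)]
  exact (sub_eq_zero.mp (norm_eq_zero.mp h0)).symm

lemma stmt16_lip {y1 y2 u w : E} (h1 : ⟪y1 - u, w - u⟫ ≤ 0) (h2 : ⟪y2 - w, u - w⟫ ≤ 0) :
    ‖u - w‖ ≤ ‖y1 - y2‖ := by
  have e : ⟪y1 - u, w - u⟫ + ⟪y2 - w, u - w⟫ = ‖w - u‖ ^ 2 + ⟪y1 - y2, w - u⟫ := by
    rw [show u - w = -(w - u) by abel, inner_neg_right,
        show y1 - u = (y1 - y2) + ((y2 - w) + (w - u)) by abel, inner_add_left, inner_add_left,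
        real_inner_self_eq_norm_sq]
    ring
  have cs := abs_real_inner_le_norm (y1 - y2) (w - u)
  have hn : ‖u - w‖ = ‖w - u‖ := norm_sub_rev u w
  rw [hn]
  nlinarith [norm_nonneg (w - u), norm_nonneg (y1 - y2), neg_abs_le (⟪y1 - y2, w - u⟫ : ℝ)]

end aux

set_option maxHeartbeats 800000 in
/-- One-step estimate for the epoch-based zeroth-order method: for `F̃`
differentiable and `(α/2)`-strongly convex with minimizer `x̄` over a nonempty closed convex
set `K`, a point `x ∈ K`, step size `η > 0`, and a square-integrable stochastic gradient `ĝ`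
with second moment at most `M²` and bias `‖E ĝ − ∇F̃(x)‖ ≤ C`, the projected update
`x⁺ = proj_K(x − η ĝ)` satisfies
`E‖x⁺ − x̄‖² ≤ (1 − ηα/2)‖x − x̄‖² + η²M² + (2η/α)C²`. -/
theorem stmt16 {d : ℕ} {Ω : Type*} [MeasurableSpace Ω]
    (μ : Measure Ω) [IsProbabilityMeasure μ]
    (K : Set (EuclideanSpace ℝ (Fin d)))
    (hKne : K.Nonempty) (hKcl : IsClosed K) (hKcv : Convex ℝ K)
    (Ft : EuclideanSpace ℝ (Fin d) → ℝ) (hFt : Differentiable ℝ Ft)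
    (α : ℝ) (hα : 0 < α)
    (hsc : ∀ x y, (α / 2) * ‖x - y‖ ^ 2 ≤ ⟪gradient Ft x - gradient Ft y, x - y⟫)
    (xbar : EuclideanSpace ℝ (Fin d)) (hxbK : xbar ∈ K) (hxb : IsMinOn Ft K xbar)
    (x : EuclideanSpace ℝ (Fin d)) (hx : x ∈ K)
    (η M C : ℝ) (hη : 0 < η) (hM : 0 ≤ M) (hC : 0 ≤ C)
    (g : Ω → EuclideanSpace ℝ (Fin d)) (hg : MemLp g 2 μ)
    (hbias : ‖(∫ ω, g ω ∂μ) - gradient Ft x‖ ≤ C)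
    (hmom : ∫ ω, ‖g ω‖ ^ 2 ∂μ ≤ M ^ 2)
    (xp : Ω → EuclideanSpace ℝ (Fin d))
    (hxp : ∀ ω, xp ω ∈ K ∧
      ∀ y ∈ K, ‖xp ω - (x - η • g ω)‖ ≤ ‖y - (x - η • g ω)‖) :
    ∫ ω, ‖xp ω - xbar‖ ^ 2 ∂μ
      ≤ (1 - η * α / 2) * ‖x - xbar‖ ^ 2 + η ^ 2 * M ^ 2 + (2 * η / α) * C ^ 2 := by
  classical
  set v : EuclideanSpace ℝ (Fin d) := x - xbar with hv
  -- projection characterization for xp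
  have hchar : ∀ ω, ∀ z ∈ K, ⟪(x - η • g ω) - xp ω, z - xp ω⟫ ≤ 0 := fun ω =>
    stmt16_proj_char hKcv (hxp ω).1 (fun z hz => (hxp ω).2 z hz)
  -- measurable projection map
  have hex : ∀ y : EuclideanSpace ℝ (Fin d), ∃ u, u ∈ K ∧ ∀ z ∈ K, ⟪y - u, z - u⟫ ≤ 0 := by
    intro y
    obtain ⟨u, huK, hmin⟩ :=
      exists_norm_eq_iInf_of_complete_convex hKne hKcl.isComplete hKcv y
    exact ⟨u, huK, (norm_eq_iInf_iff_real_inner_le_zero hKcv huK).mp hmin⟩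
  choose P hPK hPchar using hex
  have hPlip : LipschitzWith 1 P := by
    refine LipschitzWith.of_dist_le_mul fun y1 y2 => ?_
    rw [NNReal.coe_one, one_mul, dist_eq_norm, dist_eq_norm]
    exact stmt16_lip (hPchar y1 (P y2) (hPK y2)) (hPchar y2 (P y1) (hPK y1))
  have hxpP : xp = fun ω => P (x - η • g ω) := by
    funext ω
    exact stmt16_uniq ((hchar ω) (P (x - η • g ω)) (hPK _))
      (hPchar (x - η • g ω) (xp ω) (hxp ω).1)
  -- measurability and integrability
  have hgm : AEStronglyMeasurable g μ := hg.aestronglyMeasurable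
  have hym : AEStronglyMeasurable (fun ω => x - η • g ω) μ :=
    aestronglyMeasurable_const.sub (hgm.const_smul η)
  have hxpm : AEStronglyMeasurable xp μ := by
    rw [hxpP]
    exact hPlip.continuous.comp_aestronglyMeasurable hym
  have hIg : Integrable g μ := hg.integrable one_le_two
  have hI2 : Integrable (fun ω => ‖g ω‖ ^ 2) μ := by
    have h := hg.integrable_norm_rpow'
    simpa [ENNReal.toReal_ofNat, Real.rpow_natCast] using h
  have hIinner : Integrable (fun ω => ⟪v, g ω⟫) μ := hIg.const_inner v
  have hIb : Integrable (fun ω => 2 * η * ⟪v, g ω⟫) μ := hIinner.const_mul (2 * η)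
  have hIa : Integrable (fun ω => ‖v‖ ^ 2 - 2 * η * ⟪v, g ω⟫) μ :=
    (integrable_const _).sub hIb
  have hIc : Integrable (fun ω => η ^ 2 * ‖g ω‖ ^ 2) μ := hI2.const_mul (η ^ 2)
  have hIh : Integrable (fun ω => ‖v‖ ^ 2 - 2 * η * ⟪v, g ω⟫ + η ^ 2 * ‖g ω‖ ^ 2) μ :=
    hIa.add hIc
  -- pointwise bound
  have hpt : ∀ ω, ‖xp ω - xbar‖ ^ 2 ≤ ‖v‖ ^ 2 - 2 * η * ⟪v, g ω⟫ + η ^ 2 * ‖g ω‖ ^ 2 := by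
    intro ω
    have h1 : ‖xp ω - xbar‖ ^ 2 ≤ ‖(x - η • g ω) - xbar‖ ^ 2 := by
      have hc := hchar ω xbar hxbK
      have e : (x - η • g ω) - xbar = ((x - η • g ω) - xp ω) + (xp ω - xbar) := by abel
      rw [e, norm_add_sq_real]
      have e2 : ⟪(x - η • g ω) - xp ω, xp ω - xbar⟫
          = -⟪(x - η • g ω) - xp ω, xbar - xp ω⟫ := by
        rw [show xp ω - xbar = -(xbar - xp ω) by abel, inner_neg_right]
      nlinarith [sq_nonneg ‖(x - η • g ω) - xp ω‖]
    have h2 : ‖(x - η • g ω) - xbar‖ ^ 2 = ‖v‖ ^ 2 - 2 * η * ⟪v, g ω⟫ + η ^ 2 * ‖g ω‖ ^ 2 := by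
      have e : (x - η • g ω) - xbar = v - η • g ω := by rw [hv]; abel
      rw [e, norm_sub_sq_real, real_inner_smul_right, norm_smul]
      rw [Real.norm_eq_abs, abs_of_pos hη]
      ring
    linarith [h2 ▸ h1]
  have hIxp : Integrable (fun ω => ‖xp ω - xbar‖ ^ 2) μ := by
    refine hIh.mono ?_ ?_
    · exact ((hxpm.sub aestronglyMeasurable_const).norm.pow 2)
    · filter_upwards with ω
      rw [Real.norm_eq_abs, abs_of_nonneg (sq_nonneg _)]
      exact (hpt ω).trans (le_abs_self _)
  have hint_le : ∫ ω, ‖xp ω - xbar‖ ^ 2 ∂μ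
      ≤ ∫ ω, (‖v‖ ^ 2 - 2 * η * ⟪v, g ω⟫ + η ^ 2 * ‖g ω‖ ^ 2) ∂μ :=
    integral_mono hIxp hIh hpt
  set m : EuclideanSpace ℝ (Fin d) := ∫ ω, g ω ∂μ with hm
  have hRHS : ∫ ω, (‖v‖ ^ 2 - 2 * η * ⟪v, g ω⟫ + η ^ 2 * ‖g ω‖ ^ 2) ∂μ
      = ‖v‖ ^ 2 - 2 * η * ⟪v, m⟫ + η ^ 2 * ∫ ω, ‖g ω‖ ^ 2 ∂μ := by
    rw [integral_add hIa hIc, integral_sub (integrable_const _) hIb,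
      integral_const, integral_const_mul, integral_const_mul, integral_inner hIg]
    simp [hm]
  -- first-order optimality at xbar
  have hopt : 0 ≤ ⟪gradient Ft xbar, v⟫ := by
    have hgrad : HasFDerivAt Ft (InnerProductSpace.toDual ℝ _ (gradient Ft xbar)) xbar :=
      (hFt xbar).hasGradientAt.hasFDerivAt
    have hline : HasDerivAt (fun t : ℝ => xbar + t • v) v 0 := by
      simpa using ((hasDerivAt_id (0 : ℝ)).smul_const v).const_add xbar
    have hgrad' : HasFDerivAt Ft (InnerProductSpace.toDual ℝ _ (gradient Ft xbar))
        (xbar + (0 : ℝ) • v) := by simpa using hgrad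
    have hφ : HasDerivAt (fun t : ℝ => Ft (xbar + t • v)) ⟪gradient Ft xbar, v⟫ 0 := by
      have h := hgrad'.comp_hasDerivAt 0 hline
      simpa [InnerProductSpace.toDual_apply_apply, Function.comp_def] using h
    have hslope : Filter.Tendsto (slope (fun t : ℝ => Ft (xbar + t • v)) 0) (nhdsWithin 0 (Set.Ioi 0))
        (nhds ⟪gradient Ft xbar, v⟫) :=
      (hasDerivAt_iff_tendsto_slope.mp hφ).mono_left
        (nhdsWithin_mono 0 (fun t ht => ne_of_gt ht))
    refine ge_of_tendsto hslope ?_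
    filter_upwards [Ioc_mem_nhdsGT (zero_lt_one)] with t ht
    have htK : xbar + t • v ∈ K := by
      have hc := hKcv hxbK hx (by linarith [ht.2] : (0:ℝ) ≤ 1 - t) ht.1.le (by ring)
      have e : xbar + t • v = (1 - t) • xbar + t • x := by
        rw [hv]; simp [sub_smul, smul_sub, one_smul]; abel
      rw [e]; exact hc
    have hmin : Ft xbar ≤ Ft (xbar + t • v) := isMinOn_iff.mp hxb _ htK
    have hsl : slope (fun t : ℝ => Ft (xbar + t • v)) 0 t
        = (Ft (xbar + t • v) - Ft xbar) / t := by
      rw [slope_def_field]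
      simp
    rw [hsl]
    exact div_nonneg (by linarith) ht.1.le
  -- strong convexity
  have hA : α / 2 * ‖v‖ ^ 2 + ⟪gradient Ft xbar, v⟫ ≤ ⟪gradient Ft x, v⟫ := by
    have h := hsc x xbar
    rw [inner_sub_left] at h
    rw [hv]
    linarith
  -- bias bound
  have hB : -(C * ‖v‖) ≤ ⟪m - gradient Ft x, v⟫ := by
    have habs := abs_real_inner_le_norm (m - gradient Ft x) v
    have h2 : ‖m - gradient Ft x‖ * ‖v‖ ≤ C * ‖v‖ :=
      mul_le_mul_of_nonneg_right hbias (norm_nonneg v)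
    have := neg_abs_le (⟪m - gradient Ft x, v⟫ : ℝ)
    linarith
  have hmv : ⟪v, m⟫ = ⟪gradient Ft x, v⟫ + ⟪m - gradient Ft x, v⟫ := by
    rw [inner_sub_left (𝕜 := ℝ) m (gradient Ft x) v, real_inner_comm v m]
    ring
  have hkey : 2 * (C * ‖v‖) ≤ α / 2 * ‖v‖ ^ 2 + 2 * C ^ 2 / α := by
    rw [← sub_nonneg]
    have e : α / 2 * ‖v‖ ^ 2 + 2 * C ^ 2 / α - 2 * (C * ‖v‖)
        = (2 * C - α * ‖v‖) ^ 2 / (2 * α) := by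
      field_simp
      ring
    rw [e]
    positivity
  have hsum : α / 2 * ‖v‖ ^ 2 - C * ‖v‖ ≤ ⟪v, m⟫ := by
    rw [hmv]; linarith
  rw [hRHS] at hint_le
  have hmom' : η ^ 2 * ∫ ω, ‖g ω‖ ^ 2 ∂μ ≤ η ^ 2 * M ^ 2 :=
    mul_le_mul_of_nonneg_left hmom (sq_nonneg η)
  have h2η : 2 * η * (α / 2 * ‖v‖ ^ 2 - C * ‖v‖) ≤ 2 * η * ⟪v, m⟫ :=
    mul_le_mul_of_nonneg_left hsum (by positivity)
  have hηkey : η * (2 * (C * ‖v‖)) ≤ η * (α / 2 * ‖v‖ ^ 2 + 2 * C ^ 2 / α) :=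
    mul_le_mul_of_nonneg_left hkey hη.le
  have hvx : ‖v‖ = ‖x - xbar‖ := by rw [hv]
  rw [← hvx]
  have : (2 * η / α) * C ^ 2 = η * (2 * C ^ 2 / α) := by
    field_simp
  nlinarith [hint_le, hmom', h2η, hηkey]
end
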